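/- Let m ≥ 3 and d_1,…,d_n with 1 ≤ dᵢ ≤ m−1 and m | Σ dᵢ. Then there exists a rational weighting w of the complete graph on [n] satisfying: (P1) the flow through each vertex i equals dᵢ(m−dᵢ); (P2) the flow across each proper partition I ⊔ J is at least ⟨d(I)⟩_m⟨d(J)⟩_m; and (P3) the flow across each proper m-partition (one with m | d(I) and m | d(J)) is at least m. -/

import Mathlib

open Finset




/-- target function: `Fm m x = (x % m) * (m - x % m)`. -/
def Fm (m x : ℤ) : ℤ := (x % m) * (m - x % m)

lemma emod_congr {m a b : ℤ} (h : m ∣ a - b) : a % m = b % m :=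
  Int.ModEq.symm (Int.modEq_iff_dvd.mpr (by simpa using h))

lemma Fm_congr {m a b : ℤ} (h : m ∣ a - b) : Fm m a = Fm m b := by
  unfold Fm; rw [emod_congr h]

lemma Fm_eval {m a r : ℤ} (h0 : 0 ≤ r) (h1 : r < m) (h : m ∣ a - r) : Fm m a = r * (m - r) := by
  unfold Fm; rw [emod_congr h, Int.emod_eq_of_lt h0 h1]

lemma Fm_nonneg {m a : ℤ} (hm : 0 < m) : 0 ≤ Fm m a := by
  unfold Fm
  have h1 := Int.emod_nonneg a (by omega : m ≠ 0)
  have h2 := Int.emod_lt_of_pos a hm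
  nlinarith

lemma Fm_le {m a : ℤ} (hm : 0 < m) : 4 * Fm m a ≤ m ^ 2 := by
  unfold Fm
  have h1 := Int.emod_nonneg a (by omega : m ≠ 0)
  have h2 := Int.emod_lt_of_pos a hm
  nlinarith [sq_nonneg (m - 2 * (a % m))]

lemma Fm_neg {m a : ℤ} (hm : 0 < m) : Fm m (-a) = Fm m a := by
  by_cases h : a % m = 0
  · have d1 : m ∣ a := Int.dvd_of_emod_eq_zero h
    have d2 : m ∣ -a := dvd_neg.mpr d1
    unfold Fm
    rw [Int.emod_eq_zero_of_dvd d1, Int.emod_eq_zero_of_dvd d2]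
  · have h1 := Int.emod_nonneg a (by omega : m ≠ 0)
    have h2 := Int.emod_lt_of_pos a hm
    have hAa : m ∣ a - a % m := Int.dvd_self_sub_of_emod_eq rfl
    have e1 : Fm m a = (a % m) * (m - a % m) := rfl
    have e2 : Fm m (-a) = (m - a % m) * (m - (m - a % m)) := by
      refine Fm_eval (by omega) (by omega) ?_
      rw [show -a - (m - a % m) = -(a - a % m) - m from by ring]
      exact dvd_sub (dvd_neg.mpr hAa) (dvd_refl m)
    rw [e1, e2]; ring

/-- the master inequality used in the merge step. -/
lemma master {m di dj A : ℤ} (hm : 3 ≤ m) (hdi : 1 ≤ di) (hdj : 1 ≤ dj) (hv : di + dj ≤ m - 1) :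
    (di + dj) * Fm m A ≤ di * Fm m (A + dj) + dj * Fm m (A - di) + (di + dj) * (di * dj) := by
  set a := A % m with ha
  have h0 : 0 ≤ a := Int.emod_nonneg A (by omega)
  have h1 : a < m := Int.emod_lt_of_pos A (by omega)
  have hAa : m ∣ A - a := Int.dvd_self_sub_of_emod_eq rfl
  have hFA : Fm m A = a * (m - a) := Fm_eval h0 h1 hAa
  by_cases c1 : di ≤ a
  · by_cases c2 : a + dj < m
    · -- no wrap : equality
      have e1 : Fm m (A + dj) = (a + dj) * (m - (a + dj)) :=
        Fm_eval (by omega) c2 (by rw [show A + dj - (a + dj) = A - a from by ring]; exact hAa)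
      have e2 : Fm m (A - di) = (a - di) * (m - (a - di)) :=
        Fm_eval (by omega) (by omega) (by rw [show A - di - (a - di) = A - a from by ring]; exact hAa)
      rw [hFA, e1, e2]; nlinarith [sq_nonneg (di + dj)]
    · -- upper wrap
      have e1 : Fm m (A + dj) = (a + dj - m) * (m - (a + dj - m)) :=
        Fm_eval (by omega) (by omega)
          (by rw [show A + dj - (a + dj - m) = (A - a) + m from by ring]
              exact dvd_add hAa (dvd_refl m))
      have e2 : Fm m (A - di) = (a - di) * (m - (a - di)) :=
        Fm_eval (by omega) (by omega) (by rw [show A - di - (a - di) = A - a from by ring]; exact hAa)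
      rw [hFA, e1, e2]
      nlinarith [mul_nonneg (mul_nonneg (by omega : (0:ℤ) ≤ 2*m) (by omega : (0:ℤ) ≤ di)) (by omega : (0:ℤ) ≤ a + dj - m)]
  · by_cases c2 : a + dj < m
    · -- lower wrap
      have e1 : Fm m (A + dj) = (a + dj) * (m - (a + dj)) :=
        Fm_eval (by omega) c2 (by rw [show A + dj - (a + dj) = A - a from by ring]; exact hAa)
      have e2 : Fm m (A - di) = (a - di + m) * (m - (a - di + m)) :=
        Fm_eval (by omega) (by omega)
          (by rw [show A - di - (a - di + m) = (A - a) - m from by ring]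
              exact dvd_sub hAa (dvd_refl m))
      rw [hFA, e1, e2]
      nlinarith [mul_nonneg (mul_nonneg (by omega : (0:ℤ) ≤ 2*m) (by omega : (0:ℤ) ≤ dj)) (by omega : (0:ℤ) ≤ di - a)]
    · omega

lemma masterP3 {m di dj A : ℤ} (hm : 3 ≤ m) (hdi : 1 ≤ di) (hdj : 1 ≤ dj) (hv : di + dj ≤ m - 1)
    (hdvd : m ∣ A) :
    (di + dj) * m ≤ di * Fm m (A + dj) + dj * Fm m (A - di) + (di + dj) * (di * dj) := by
  have e1 : Fm m (A + dj) = dj * (m - dj) :=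
    Fm_eval (by omega) (by omega) (by simpa using hdvd)
  have e2 : Fm m (A - di) = (m - di) * (m - (m - di)) :=
    Fm_eval (by omega) (by omega)
      (by rw [show A - di - (m - di) = A - m from by ring]
          exact dvd_sub hdvd (dvd_refl m))
  rw [e1, e2]
  nlinarith [mul_nonneg (by omega : (0:ℤ) ≤ di - 1) (by omega : (0:ℤ) ≤ dj - 1)]

section XX
variable {V : Type} [Fintype V] [DecidableEq V]

/-- strengthened invariant -/
def goodW (m : ℕ) (d : V → ℤ) (w : V → V → ℚ) : Prop :=
  (∀ x y, w x y = w y x) ∧ (∀ x, w x x = 0) ∧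
  (∀ x, ∑ y, w x y = ((d x * ((m : ℤ) - d x) : ℤ) : ℚ)) ∧
  (∀ I : Finset V, ((Fm m (∑ x ∈ I, d x) : ℤ) : ℚ) ≤ ∑ x ∈ I, ∑ y ∈ Iᶜ, w x y) ∧
  (∀ I : Finset V, I.Nonempty → Iᶜ.Nonempty → (m : ℤ) ∣ ∑ x ∈ I, d x →
    (m : ℚ) ≤ ∑ x ∈ I, ∑ y ∈ Iᶜ, w x y)

lemma cut_comm {w : V → V → ℚ} (hsym : ∀ x y, w x y = w y x) (I : Finset V) :
    ∑ x ∈ I, ∑ y ∈ Iᶜ, w x y = ∑ x ∈ Iᶜ, ∑ y ∈ I, w x y := by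
  rw [Finset.sum_comm]
  exact Finset.sum_congr rfl fun x _ => Finset.sum_congr rfl fun y _ => hsym y x

lemma cut_singleton {w : V → V → ℚ} (hdiag : ∀ x, w x x = 0) (x : V) :
    ∑ a ∈ ({x} : Finset V), ∑ y ∈ ({x} : Finset V)ᶜ, w a y = ∑ y, w x y := by
  rw [Finset.sum_singleton]
  have h := Finset.sum_compl_add_sum ({x} : Finset V) (w x)
  rw [Finset.sum_singleton, hdiag] at h
  linarith

/-- P2 for small/large sets follows from flows. -/
lemma cut_small {m : ℕ} {d : V → ℤ} {w : V → V → ℚ} (hm : 3 ≤ m)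
    (hd : ∀ x, 1 ≤ d x ∧ d x ≤ (m : ℤ) - 1) (hdiv : (m : ℤ) ∣ ∑ x, d x)
    (hsym : ∀ x y, w x y = w y x) (hdiag : ∀ x, w x x = 0)
    (hflow : ∀ x, ∑ y, w x y = ((d x * ((m : ℤ) - d x) : ℤ) : ℚ))
    (I : Finset V) (h : I.card ≤ 1 ∨ Iᶜ.card ≤ 1) :
    ((Fm m (∑ x ∈ I, d x) : ℤ) : ℚ) ≤ ∑ x ∈ I, ∑ y ∈ Iᶜ, w x y := by
  have hFsing : ∀ x : V, Fm m (d x) = d x * ((m : ℤ) - d x) := fun x => by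
    unfold Fm
    rw [Int.emod_eq_of_lt (by linarith [(hd x).1]) (by linarith [(hd x).2])]
  rcases h with h | h
  · rcases Nat.le_one_iff_eq_zero_or_eq_one.mp h with h0 | h1
    · rw [Finset.card_eq_zero.mp h0]
      simp [Fm]
    · obtain ⟨x, rfl⟩ := Finset.card_eq_one.mp h1
      rw [cut_singleton hdiag, hflow, Finset.sum_singleton, hFsing]
  · rcases Nat.le_one_iff_eq_zero_or_eq_one.mp h with h0 | h1
    · have hc0 := Finset.card_eq_zero.mp h0
      have : I = Finset.univ := by rwa [Finset.compl_eq_empty_iff] at hc0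
      subst this
      rw [Finset.compl_univ]
      simp only [Finset.sum_empty, Finset.sum_const_zero]
      have : Fm m (∑ x, d x) = 0 := by
        unfold Fm; rw [Int.emod_eq_zero_of_dvd hdiv]; ring
      rw [this]; norm_num
    · obtain ⟨x, hc⟩ := Finset.card_eq_one.mp h1
      rw [cut_comm hsym, hc, Finset.sum_singleton]
      have h2 := Finset.sum_compl_add_sum I (w x)
      rw [hc, Finset.sum_singleton, hdiag] at h2
      have hsum : ∑ a ∈ I, d a = (∑ a, d a) - d x := by
        have h2 := Finset.sum_compl_add_sum I d
        rw [hc, Finset.sum_singleton] at h2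
        linarith
      have heq : Fm (m:ℤ) (∑ a ∈ I, d a) = d x * ((m:ℤ) - d x) := by
        rw [hsum,
          Fm_congr (show (m:ℤ) ∣ ((∑ a, d a) - d x) - (-(d x)) from by
            rw [show ((∑ a, d a) - d x) - (-(d x)) = ∑ a, d a from by ring]; exact hdiv),
          Fm_neg (by exact_mod_cast Nat.zero_lt_of_lt hm), hFsing]
      have h3 : ∑ y ∈ I, w x y = ((d x * ((m:ℤ) - d x) : ℤ) : ℚ) := by
        rw [← hflow x]; linarith
      rw [h3, heq]

/-- complement invariance -/
lemma goodW_compl {m : ℕ} {d : V → ℤ} {w : V → V → ℚ} (hm : 3 ≤ m)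
    (h : goodW m (fun x => (m : ℤ) - d x) w) : goodW m d w := by
  obtain ⟨hsym, hdiag, hflow, hP2, hP3⟩ := h
  have hm0 : (0:ℤ) < m := by exact_mod_cast Nat.zero_lt_of_lt hm
  have hdsum : ∀ I : Finset V, ∑ x ∈ I, ((m:ℤ) - d x) = I.card * m - ∑ x ∈ I, d x := by
    intro I
    rw [Finset.sum_sub_distrib, Finset.sum_const, nsmul_eq_mul]
  refine ⟨hsym, hdiag, fun x => ?_, fun I => ?_, fun I h1 h2 h3 => ?_⟩
  · rw [hflow x, show (((m:ℤ) - d x) * ((m:ℤ) - ((m:ℤ) - d x))) = d x * ((m:ℤ) - d x) from by ring]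
  · have := hP2 I
    rwa [hdsum I,
      Fm_congr (show (m:ℤ) ∣ ((I.card : ℤ) * m - ∑ x ∈ I, d x) - (-(∑ x ∈ I, d x)) from
        ⟨I.card, by ring⟩),
      Fm_neg hm0] at this
  · refine hP3 I h1 h2 ?_
    rw [hdsum I]
    exact Dvd.dvd.sub ⟨I.card, by ring⟩ h3
lemma base_le2 {m : ℕ} (hm : 3 ≤ m) (d : V → ℤ)
    (hd : ∀ x, 1 ≤ d x ∧ d x ≤ (m : ℤ) - 1) (hdiv : (m : ℤ) ∣ ∑ x, d x)
    (hcard : Fintype.card V ≤ 2) : ∃ w : V → V → ℚ, goodW m d w := by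
  have hm0 : (0:ℤ) < m := by exact_mod_cast Nat.zero_lt_of_lt hm
  set w : V → V → ℚ := fun x y => if x = y then 0 else ((d x * d y : ℤ) : ℚ) with hw
  have hsym : ∀ x y, w x y = w y x := by
    intro x y
    rw [hw]
    dsimp only
    by_cases h : x = y
    · subst h; rfl
    · rw [if_neg h, if_neg (Ne.symm h)]; push_cast; ring
  have hdiag : ∀ x, w x x = 0 := by intro x; simp [hw]
  have hflow : ∀ x, ∑ y, w x y = ((d x * ((m : ℤ) - d x) : ℤ) : ℚ) := by
    intro x
    have hSm : ∑ y, d y = (m:ℤ) := by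
      obtain ⟨c, hc⟩ := hdiv
      have hn1 : 1 ≤ Fintype.card V := Fintype.card_pos_iff.mpr ⟨x⟩
      have hlow : (Fintype.card V : ℤ) ≤ ∑ y, d y := by
        calc (Fintype.card V : ℤ) = ∑ _y : V, 1 := by simp
        _ ≤ ∑ y, d y := Finset.sum_le_sum fun y _ => (hd y).1
      have hhigh : ∑ y, d y ≤ (Fintype.card V : ℤ) * ((m:ℤ) - 1) := by
        calc ∑ y, d y ≤ ∑ _y : V, ((m:ℤ) - 1) := Finset.sum_le_sum fun y _ => (hd y).2
        _ = (Fintype.card V : ℤ) * ((m:ℤ) - 1) := by simp [mul_comm]; ring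
      have hcard' : (Fintype.card V : ℤ) ≤ 2 := by exact_mod_cast hcard
      have hn1' : (1:ℤ) ≤ (Fintype.card V : ℤ) := by exact_mod_cast hn1
      have hc1 : 1 ≤ c := by nlinarith
      have hc2 : c ≤ 1 := by nlinarith
      have : c = 1 := le_antisymm hc2 hc1
      rw [hc, this, mul_one]
    have h1 : ∑ y, w x y =
        ∑ y, (((d x * d y : ℤ) : ℚ) - (if x = y then ((d x * d y : ℤ) : ℚ) else 0)) := by
      apply Finset.sum_congr rfl
      intro y _
      rw [hw]
      by_cases h : x = y <;> simp [h]
    rw [h1, Finset.sum_sub_distrib, Finset.sum_ite_eq (Finset.univ) x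
      (fun y => ((d x * d y : ℤ) : ℚ))]
    simp only [Finset.mem_univ, if_pos]
    have h2 : ∑ y, ((d x * d y : ℤ) : ℚ) = ((d x * ∑ y, d y : ℤ) : ℚ) := by
      push_cast; rw [← Finset.mul_sum]
    rw [h2, hSm]
    push_cast; ring
  refine ⟨w, hsym, hdiag, hflow, ?_, ?_⟩
  · intro I
    have hcc := Finset.card_add_card_compl I
    exact cut_small hm hd hdiv hsym hdiag hflow I (by omega)
  · intro I h1 h2 h3
    have hcc := Finset.card_add_card_compl I
    have hc1 : 1 ≤ I.card := Finset.card_pos.mpr h1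
    have hc2 : 1 ≤ Iᶜ.card := Finset.card_pos.mpr h2
    have : I.card = 1 := by omega
    obtain ⟨x, rfl⟩ := Finset.card_eq_one.mp this
    rw [Finset.sum_singleton] at h3
    have := Int.le_of_dvd (by linarith [(hd x).1]) h3
    linarith [(hd x).2]

lemma const_case {m : ℕ} (hm : 3 ≤ m) (d : V → ℤ)
    (hd : ∀ x, 1 ≤ d x ∧ d x ≤ (m : ℤ) - 1) (hdiv : (m : ℤ) ∣ ∑ x, d x)
    (hcard : 3 ≤ Fintype.card V) (hconst : ∀ x y : V, x ≠ y → d x + d y = (m:ℤ)) :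
    ∃ w : V → V → ℚ, goodW m d w := by
  have hm0 : (0:ℤ) < m := by exact_mod_cast Nat.zero_lt_of_lt hm
  set n : ℕ := Fintype.card V with hn
  have hn1 : (1:ℚ) ≤ ((n:ℚ) - 1) := by
    have : (3:ℚ) ≤ (n:ℚ) := by exact_mod_cast hcard
    linarith
  have hn0 : ((n:ℚ) - 1) ≠ 0 := by linarith
  -- all degrees are m/2
  have hhalf : ∀ x : V, 2 * d x = (m:ℤ) := by
    intro x
    have h2 : 1 < (Finset.univ.erase x).card := by
      rw [Finset.card_erase_of_mem (Finset.mem_univ x)]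
      have hcu : (Finset.univ : Finset V).card = n := by rw [Finset.card_univ]
      omega
    obtain ⟨y, hy, z, hz, hyz⟩ := Finset.one_lt_card.mp h2
    have hyx : y ≠ x := Finset.ne_of_mem_erase hy
    have hzx : z ≠ x := Finset.ne_of_mem_erase hz
    have e1 := hconst x y (Ne.symm hyx)
    have e2 := hconst x z (Ne.symm hzx)
    have e3 := hconst y z hyz
    linarith
  -- m is even and ≥ 4
  have hm4 : 4 ≤ m := by
    have hpos : 0 < Fintype.card V := by rw [← hn]; omega
    obtain ⟨x⟩ := Fintype.card_pos_iff.mp hpos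
    have := hhalf x
    have h1 := (hd x).1
    omega
  set q : ℚ := (m:ℚ)^2 / (4 * ((n:ℚ) - 1)) with hq
  have hqpos : 0 ≤ q := by positivity
  set w : V → V → ℚ := fun x y => if x = y then 0 else q with hw
  have hsym : ∀ x y, w x y = w y x := by
    intro x y
    rw [hw]
    dsimp only
    by_cases h : x = y
    · subst h; rfl
    · rw [if_neg h, if_neg (Ne.symm h)]
  have hdiag : ∀ x, w x x = 0 := by intro x; simp [hw]
  have hflowval : ∀ x : V, ((d x * ((m : ℤ) - d x) : ℤ) : ℚ) = (m:ℚ)^2/4 := by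
    intro x
    have h := hhalf x
    have : (2:ℚ) * (d x : ℚ) = (m:ℚ) := by exact_mod_cast h
    push_cast
    nlinarith [this]
  have hflow : ∀ x, ∑ y, w x y = ((d x * ((m : ℤ) - d x) : ℤ) : ℚ) := by
    intro x
    have h1 : ∑ y, w x y = ∑ y, (q - (if x = y then q else 0)) := by
      apply Finset.sum_congr rfl
      intro y _
      rw [hw]
      by_cases h : x = y <;> simp [h]
    rw [h1, Finset.sum_sub_distrib, Finset.sum_ite_eq (Finset.univ) x (fun _ => q)]
    simp only [Finset.mem_univ, if_pos, Finset.sum_const, Finset.card_univ, nsmul_eq_mul]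
    rw [hflowval x, hq]
    field_simp
    ring
  -- cut value for general I
  have hcut : ∀ I : Finset V, ∑ x ∈ I, ∑ y ∈ Iᶜ, w x y = (I.card : ℚ) * (Iᶜ.card : ℚ) * q := by
    intro I
    have : ∀ x ∈ I, ∑ y ∈ Iᶜ, w x y = (Iᶜ.card : ℚ) * q := by
      intro x hx
      have : ∀ y ∈ Iᶜ, w x y = q := by
        intro y hy
        have : x ≠ y := fun h => (Finset.mem_compl.mp hy) (h ▸ hx)
        rw [hw]; exact if_neg this
      rw [Finset.sum_congr rfl this, Finset.sum_const, nsmul_eq_mul]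
    rw [Finset.sum_congr rfl this, Finset.sum_const, nsmul_eq_mul]
    ring
  have hcutbig : ∀ I : Finset V, 1 ≤ I.card → 1 ≤ Iᶜ.card →
      (m:ℚ)^2/4 ≤ ∑ x ∈ I, ∑ y ∈ Iᶜ, w x y := by
    intro I h1 h2
    rw [hcut I]
    have hcc := Finset.card_add_card_compl I
    have hp : (1:ℚ) ≤ (I.card : ℚ) := by exact_mod_cast h1
    have hpc : (1:ℚ) ≤ (Iᶜ.card : ℚ) := by exact_mod_cast h2
    have hsum : (I.card : ℚ) + (Iᶜ.card : ℚ) = (n:ℚ) := by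
      rw [hn]; exact_mod_cast hcc
    have hbound : ((n:ℚ) - 1) ≤ (I.card : ℚ) * (Iᶜ.card : ℚ) := by nlinarith
    have e : ((n:ℚ)-1) * q = (m:ℚ)^2/4 := by rw [hq]; field_simp
    calc (m:ℚ)^2/4 = ((n:ℚ)-1) * q := e.symm
    _ ≤ ((I.card:ℚ) * (Iᶜ.card:ℚ)) * q := mul_le_mul_of_nonneg_right hbound hqpos
    _ = (I.card:ℚ) * (Iᶜ.card:ℚ) * q := by ring
  refine ⟨w, hsym, hdiag, hflow, ?_, ?_⟩
  · intro I
    rcases Nat.lt_or_ge I.card 1 with h1 | h1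
    · exact cut_small hm hd hdiv hsym hdiag hflow I (Or.inl (by omega))
    rcases Nat.lt_or_ge Iᶜ.card 1 with h2 | h2
    · exact cut_small hm hd hdiv hsym hdiag hflow I (Or.inr (by omega))
    refine le_trans ?_ (hcutbig I h1 h2)
    have h4 := Fm_le (m := (m:ℤ)) (a := ∑ x ∈ I, d x) hm0
    have hcast : ((4 * Fm m (∑ x ∈ I, d x) : ℤ) : ℚ) ≤ (((m:ℤ)^2 : ℤ) : ℚ) := by
      exact_mod_cast h4
    push_cast at hcast
    linarith
  · intro I h1 h2 _
    have hc1 : 1 ≤ I.card := Finset.card_pos.mpr h1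
    have hc2 : 1 ≤ Iᶜ.card := Finset.card_pos.mpr h2
    refine le_trans ?_ (hcutbig I hc1 hc2)
    have hmq : (4:ℚ) ≤ (m:ℚ) := by exact_mod_cast hm4
    rw [le_div_iff₀ (by norm_num)]
    nlinarith
lemma glue_aux {m di dj A : ℤ} (hm : 3 ≤ m) (hdi : 1 ≤ di) (hdj : 1 ≤ dj) (hv : di + dj ≤ m - 1)
    {C0 C1 FA : ℚ}
    (hkey : FA * ((di:ℚ) + (dj:ℚ)) ≤
      (di:ℚ) * ((Fm m (A + dj) : ℤ) : ℚ) + (dj:ℚ) * ((Fm m (A - di) : ℤ) : ℚ) +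
        ((di:ℚ) + (dj:ℚ)) * ((di:ℚ) * (dj:ℚ)))
    (h1 : ((Fm m (A + dj) : ℤ) : ℚ) ≤ C1) (h0 : ((Fm m (A - di) : ℤ) : ℚ) ≤ C0) :
    FA ≤ (di:ℚ) * (dj:ℚ) + (di:ℚ)/((di:ℚ)+(dj:ℚ)) * C1 +
      (1 - (di:ℚ)/((di:ℚ)+(dj:ℚ))) * C0 := by
  have hdiQ : (1:ℚ) ≤ (di:ℚ) := by exact_mod_cast hdi
  have hdjQ : (1:ℚ) ≤ (dj:ℚ) := by exact_mod_cast hdj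
  have hdvQ : (0:ℚ) < (di:ℚ) + (dj:ℚ) := by linarith
  set ρ : ℚ := (di:ℚ)/((di:ℚ)+(dj:ℚ)) with hρ
  have hρ0 : 0 ≤ ρ := by positivity
  have hρ1 : ρ ≤ 1 := by
    rw [hρ, div_le_one hdvQ]; linarith
  set F1 : ℚ := ((Fm m (A + dj) : ℤ) : ℚ)
  set F0 : ℚ := ((Fm m (A - di) : ℤ) : ℚ)
  have e : (di:ℚ) * (dj:ℚ) + ρ * F1 + (1 - ρ) * F0 =
      ((di:ℚ) * F1 + (dj:ℚ) * F0 + ((di:ℚ)+(dj:ℚ)) * ((di:ℚ)*(dj:ℚ))) / ((di:ℚ)+(dj:ℚ)) := by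
    rw [hρ]; field_simp; ring
  have hmid : FA ≤ (di:ℚ) * (dj:ℚ) + ρ * F1 + (1 - ρ) * F0 := by
    rw [e, le_div_iff₀ hdvQ]
    linarith
  have b1 : ρ * F1 ≤ ρ * C1 := mul_le_mul_of_nonneg_left h1 hρ0
  have b0 : (1 - ρ) * F0 ≤ (1 - ρ) * C0 := mul_le_mul_of_nonneg_left h0 (by linarith)
  linarith

lemma glue {m di dj A : ℤ} (hm : 3 ≤ m) (hdi : 1 ≤ di) (hdj : 1 ≤ dj) (hv : di + dj ≤ m - 1)
    {C0 C1 : ℚ} (h1 : ((Fm m (A + dj) : ℤ) : ℚ) ≤ C1) (h0 : ((Fm m (A - di) : ℤ) : ℚ) ≤ C0) :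
    ((Fm m A : ℤ) : ℚ) ≤ (di:ℚ) * (dj:ℚ) + (di:ℚ)/((di:ℚ)+(dj:ℚ)) * C1 +
      (1 - (di:ℚ)/((di:ℚ)+(dj:ℚ))) * C0 := by
  refine glue_aux hm hdi hdj hv ?_ h1 h0
  have hkeyZ := master (m := m) (di := di) (dj := dj) (A := A) hm hdi hdj hv
  have : (((di + dj) * Fm m A : ℤ) : ℚ) ≤
      ((di * Fm m (A + dj) + dj * Fm m (A - di) + (di + dj) * (di * dj) : ℤ) : ℚ) := by
    exact_mod_cast hkeyZ
  push_cast at this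
  linarith

lemma glueP3 {m di dj A : ℤ} (hm : 3 ≤ m) (hdi : 1 ≤ di) (hdj : 1 ≤ dj) (hv : di + dj ≤ m - 1)
    (hdvd : m ∣ A)
    {C0 C1 : ℚ} (h1 : ((Fm m (A + dj) : ℤ) : ℚ) ≤ C1) (h0 : ((Fm m (A - di) : ℤ) : ℚ) ≤ C0) :
    ((m:ℤ):ℚ) ≤ (di:ℚ) * (dj:ℚ) + (di:ℚ)/((di:ℚ)+(dj:ℚ)) * C1 +
      (1 - (di:ℚ)/((di:ℚ)+(dj:ℚ))) * C0 := by
  refine glue_aux hm hdi hdj hv ?_ h1 h0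
  have hkeyZ := masterP3 (m := m) (di := di) (dj := dj) (A := A) hm hdi hdj hv hdvd
  have : (((di + dj) * m : ℤ) : ℚ) ≤
      ((di * Fm m (A + dj) + dj * Fm m (A - di) + (di + dj) * (di * dj) : ℤ) : ℚ) := by
    exact_mod_cast hkeyZ
  push_cast at this
  linarith

lemma merge_step {m : ℕ} (hm : 3 ≤ m) (d : V → ℤ)
    (hd : ∀ x, 1 ≤ d x ∧ d x ≤ (m : ℤ) - 1) (hdiv : (m : ℤ) ∣ ∑ x, d x)
    (i j : V) (hij : i ≠ j) (hsum : d i + d j < m)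
    (IH : ∀ (d' : {x : V // x ≠ i} → ℤ), (∀ x, 1 ≤ d' x ∧ d' x ≤ (m:ℤ) - 1) →
       ((m:ℤ) ∣ ∑ x, d' x) → ∃ w', goodW m d' w') :
    ∃ w : V → V → ℚ, goodW m d w := by
  have hm0 : (0:ℤ) < m := by exact_mod_cast Nat.zero_lt_of_lt hm
  set dv : ℤ := d i + d j with hdv
  have hdv1 : 2 ≤ dv := by have := (hd i).1; have := (hd j).1; omega
  have hdv2 : dv ≤ (m:ℤ) - 1 := by omega
  set ds : V → ℤ := fun x => if x = j then dv else d x with hds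
  have hdsi : ds i = d i := by rw [hds]; simp [hij]
  have hdsj : ds j = dv := by rw [hds]; simp
  have hdsz : ∀ z, z ≠ j → ds z = d z := by intro z hz; rw [hds]; simp [hz]
  -- the merged instance
  set p : V → Prop := fun x => x ≠ i with hp
  have hmemc : ∀ x : V, x ∈ ({i} : Finset V)ᶜ ↔ p x := by
    intro x; rw [Finset.mem_compl, Finset.mem_singleton]
  obtain ⟨w', hw'⟩ : ∃ w', goodW m (fun x : {x : V // p x} => ds ↑x) w' := by
    apply IH
    · intro x
      by_cases h : (x : V) = j
      · rw [h, hdsj]; exact ⟨by omega, by omega⟩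
      · rw [hdsz _ h]; exact hd x
    · have h1 : ∑ x : {x : V // p x}, ds ↑x = ∑ x ∈ ({i} : Finset V)ᶜ, ds x :=
        (Finset.sum_subtype _ hmemc ds).symm
      have h2 : ∑ x ∈ ({i} : Finset V)ᶜ, ds x = (∑ x, ds x) - ds i := by
        have h3 := Finset.sum_compl_add_sum ({i} : Finset V) ds
        rw [Finset.sum_singleton] at h3
        linarith
      have h4 : ∑ x, ds x = (∑ x, d x) + d i := by
        have h5 : ∀ x, ds x = d x + (if x = j then d i else 0) := by
          intro x
          by_cases h : x = j
          · subst h; rw [hdsj]; simp; omega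
          · rw [hdsz _ h]; simp [h]
        rw [Finset.sum_congr rfl fun x _ => h5 x, Finset.sum_add_distrib,
          Finset.sum_ite_eq' Finset.univ j (fun _ => d i)]
        simp
      rw [h1, h2, h4, hdsi]
      simpa using hdiv
  obtain ⟨hw'sym, hw'diag, hw'flow, hw'P2, hw'P3⟩ := hw'
  -- W' : V-level version of w'
  set W' : V → V → ℚ := fun x y =>
    if hx : x ≠ i then (if hy : y ≠ i then w' ⟨x, hx⟩ ⟨y, hy⟩ else 0) else 0 with hW'
  have W'i1 : ∀ y, W' i y = 0 := by intro y; rw [hW']; simp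
  have W'i2 : ∀ x, W' x i = 0 := by
    intro x; rw [hW']
    by_cases hx : x ≠ i <;> simp [hx]
  have W'coe : ∀ (x y : {x : V // p x}), W' ↑x ↑y = w' x y := by
    intro x y; rw [hW']; simp [show (x:V) ≠ i from x.2, show (y:V) ≠ i from y.2]
  have W'symm : ∀ x y, W' x y = W' y x := by
    intro x y
    by_cases hx : x = i
    · subst hx; rw [W'i1, W'i2]
    by_cases hy : y = i
    · subst hy; rw [W'i1, W'i2]
    rw [show x = ((⟨x, hx⟩ : {x : V // p x}) : V) from rfl,
        show y = ((⟨y, hy⟩ : {x : V // p x}) : V) from rfl, W'coe, W'coe, hw'sym]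
  have W'diag : ∀ x, W' x x = 0 := by
    intro x
    by_cases hx : x = i
    · subst hx; exact W'i1 x
    · rw [show x = ((⟨x, hx⟩ : {x : V // p x}) : V) from rfl, W'coe, hw'diag]
  -- flow transfer
  have Wflow : ∀ z : V, z ≠ i → ∑ y, W' z y = ((ds z * ((m:ℤ) - ds z) : ℤ) : ℚ) := by
    intro z hz
    have h1 : ∑ y ∈ ({i} : Finset V)ᶜ, W' z y = ∑ y : {x : V // p x}, W' z ↑y :=
      Finset.sum_subtype _ hmemc (W' z)
    have h2 := Finset.sum_compl_add_sum ({i} : Finset V) (W' z)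
    rw [Finset.sum_singleton, W'i2] at h2
    have h3 : ∑ y : {x : V // p x}, W' z ↑y = ∑ y, w' ⟨z, hz⟩ y := by
      apply Finset.sum_congr rfl
      intro y _
      exact W'coe ⟨z, hz⟩ y
    rw [← hw'flow ⟨z, hz⟩, ← h3, ← h1]
    linarith
  -- cut transfer
  have hsubc : ∀ S : Finset V, (S.subtype p)ᶜ = Sᶜ.subtype p := by
    intro S
    ext x
    simp [Finset.mem_subtype, Finset.mem_compl]
  have hcutW : ∀ S : Finset V, i ∉ S →
      ∑ x' ∈ S.subtype p, ∑ y' ∈ (S.subtype p)ᶜ, w' x' y' =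
      ∑ x ∈ S, ∑ y ∈ Sᶜ, W' x y := by
    intro S hiS
    rw [hsubc]
    have h1 : ∀ x' : {x : V // p x}, ∑ y' ∈ Sᶜ.subtype p, w' x' y' =
        ∑ y ∈ Sᶜ, W' ↑x' y := by
      intro x'
      have e1 : ∑ y' ∈ Sᶜ.subtype p, w' x' y' = ∑ y' ∈ Sᶜ.subtype p, W' ↑x' ↑y' :=
        Finset.sum_congr rfl fun y' _ => (W'coe x' y').symm
      rw [e1, Finset.sum_subtype_eq_sum_filter (fun y => W' (↑x' : V) y)]
      rw [show Sᶜ.filter p = Sᶜ.erase i from Finset.filter_ne' Sᶜ i]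
      exact Finset.sum_erase _ (W'i2 ↑x')
    rw [Finset.sum_congr rfl fun x' _ => h1 x',
      Finset.sum_subtype_eq_sum_filter (fun x => ∑ y ∈ Sᶜ, W' x y)]
    rw [show S.filter p = S.erase i from Finset.filter_ne' S i,
      Finset.erase_eq_of_notMem hiS]
  have hdsum : ∀ S : Finset V, i ∉ S → ∑ x' ∈ S.subtype p, ds ↑x' = ∑ x ∈ S, ds x := by
    intro S hiS
    rw [Finset.sum_subtype_eq_sum_filter (fun x => ds x),
      show S.filter p = S.erase i from Finset.filter_ne' S i,
      Finset.erase_eq_of_notMem hiS]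
  have hP2W : ∀ S : Finset V, i ∉ S →
      ((Fm m (∑ x ∈ S, ds x) : ℤ) : ℚ) ≤ ∑ x ∈ S, ∑ y ∈ Sᶜ, W' x y := by
    intro S hiS
    have h := hw'P2 (S.subtype p)
    rw [hcutW S hiS] at h
    have e : ∑ x ∈ S.subtype p, (fun x : {x : V // p x} => ds ↑x) x = ∑ x ∈ S, ds x :=
      hdsum S hiS
    rwa [e] at h
  have hP3W : ∀ S : Finset V, i ∉ S → S.Nonempty → (∃ y, y ≠ i ∧ y ∉ S) →
      ((m:ℤ) ∣ ∑ x ∈ S, ds x) → (m:ℚ) ≤ ∑ x ∈ S, ∑ y ∈ Sᶜ, W' x y := by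
    intro S hiS hne hco hdvd
    obtain ⟨x, hx⟩ := hne
    obtain ⟨y, hyi, hyS⟩ := hco
    have h := hw'P3 (S.subtype p)
      ⟨⟨x, fun hh => hiS (hh ▸ hx)⟩, Finset.mem_subtype.mpr hx⟩
      ⟨⟨y, hyi⟩, by rw [hsubc]; exact Finset.mem_subtype.mpr (Finset.mem_compl.mpr hyS)⟩
      (by rw [hdsum S hiS]; exact hdvd)
    rwa [hcutW S hiS] at h
  -- define the new weighting
  set ρ : ℚ := (d i : ℚ) / ((d i : ℚ) + (d j : ℚ)) with hρ
  set w : V → V → ℚ := fun x y =>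
    if x = i then (if y = i then 0 else if y = j then ((d i : ℚ) * (d j : ℚ)) else ρ * W' j y)
    else if y = i then (if x = j then ((d i : ℚ) * (d j : ℚ)) else ρ * W' j x)
    else (if x = j ∨ y = j then (1 - ρ) else 1) * W' x y with hwdef
  -- pointwise row lemmas
  have rowi : ∀ y, w i y = (if y = j then (d i : ℚ) * (d j : ℚ) else 0) + ρ * W' j y := by
    intro y
    rw [hwdef]
    dsimp only
    rw [if_pos rfl]
    by_cases hy : y = i
    · rw [if_pos hy, hy, if_neg hij, W'i2]
      ring
    · by_cases hyj : y = j
      · rw [if_neg hy, if_pos hyj, if_pos hyj, hyj, W'diag]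
        ring
      · rw [if_neg hy, if_neg hyj, if_neg hyj]
        ring
  have rowj : ∀ y, w j y = (if y = i then (d i : ℚ) * (d j : ℚ) else 0) + (1 - ρ) * W' j y := by
    intro y
    rw [hwdef]
    dsimp only
    rw [if_neg (Ne.symm hij)]
    by_cases hy : y = i
    · rw [if_pos hy, if_pos rfl, if_pos hy, hy, W'i2]
      ring
    · rw [if_neg hy, if_neg hy, if_pos (Or.inl rfl)]
      ring
  have rowz : ∀ z, z ≠ i → z ≠ j → ∀ y, w z y =
      W' z y + (if y = i then ρ * W' z j else 0) - (if y = j then ρ * W' z j else 0) := by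
    intro z hzi hzj y
    rw [hwdef]
    dsimp only
    rw [if_neg hzi]
    by_cases hy : y = i
    · rw [if_pos hy, if_neg hzj, if_pos hy, hy, W'i2, if_neg hij, W'symm j z]
      ring
    · by_cases hyj : y = j
      · rw [if_neg hy, if_pos (Or.inr hyj), if_neg hy, if_pos hyj, hyj]
        ring
      · rw [if_neg hy, if_neg (by simp [hzj, hyj] : ¬(z = j ∨ y = j)), if_neg hy, if_neg hyj]
        ring
  have hsym : ∀ x y, w x y = w y x := by
    intro x y
    by_cases hx : x = i
    · by_cases hy : y = i
      · rw [hx, hy]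
      · rw [hx, rowi y, hwdef]
        dsimp only
        rw [if_neg hy, if_pos rfl]
        by_cases hyj : y = j
        · rw [if_pos hyj, if_pos hyj, hyj, W'diag]
          ring
        · rw [if_neg hyj, if_neg hyj]
          ring
    · by_cases hy : y = i
      · rw [hy, rowi x, hwdef]
        dsimp only
        rw [if_neg hx, if_pos rfl]
        by_cases hxj : x = j
        · rw [if_pos hxj, if_pos hxj, hxj, W'diag]
          ring
        · rw [if_neg hxj, if_neg hxj]
          ring
      · rw [hwdef]
        dsimp only
        rw [if_neg hx, if_neg hy, if_neg hy, if_neg hx, W'symm x y]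
        by_cases hxj : x = j
        · by_cases hyj : y = j
          · rw [if_pos (Or.inl hxj), if_pos (Or.inl hyj)]
          · rw [if_pos (Or.inl hxj), if_pos (Or.inr hxj)]
        · by_cases hyj : y = j
          · rw [if_pos (Or.inr hyj), if_pos (Or.inl hyj)]
          · rw [if_neg (by simp [hxj, hyj] : ¬(x = j ∨ y = j)),
              if_neg (by simp [hxj, hyj] : ¬(y = j ∨ x = j))]
  have hdiag : ∀ x, w x x = 0 := by
    intro x
    by_cases hx : x = i
    · rw [hwdef]; dsimp only; rw [if_pos hx, if_pos hx]
    · rw [hwdef]; dsimp only; rw [if_neg hx, if_neg hx, W'diag]; ring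
  -- basic rational facts
  have hdiQ : (1:ℚ) ≤ (d i : ℚ) := by exact_mod_cast (hd i).1
  have hdjQ : (1:ℚ) ≤ (d j : ℚ) := by exact_mod_cast (hd j).1
  have hdvQ : (0:ℚ) < (d i : ℚ) + (d j : ℚ) := by linarith
  have hρdv : ρ * ((d i : ℚ) + (d j : ℚ)) = (d i : ℚ) := by
    rw [hρ]; field_simp
  have h1ρdv : (1 - ρ) * ((d i : ℚ) + (d j : ℚ)) = (d j : ℚ) := by
    rw [hρ]; field_simp; ring
  have hdvc : ((dv * ((m:ℤ) - dv) : ℤ) : ℚ) =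
      ((d i:ℚ) + (d j:ℚ)) * ((m:ℚ) - ((d i:ℚ) + (d j:ℚ))) := by
    push_cast [hdv]; ring
  -- flows
  have hflow : ∀ x, ∑ y, w x y = ((d x * ((m : ℤ) - d x) : ℤ) : ℚ) := by
    intro x
    by_cases hx : x = i
    · rw [hx, Finset.sum_congr rfl fun y _ => rowi y, Finset.sum_add_distrib,
        Finset.sum_ite_eq' Finset.univ j (fun _ => (d i : ℚ) * (d j : ℚ)), ← Finset.mul_sum,
        Wflow j (Ne.symm hij), hdsj, hdvc]
      simp only [Finset.mem_univ, if_pos]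
      rw [show ρ * (((d i:ℚ) + (d j:ℚ)) * ((m:ℚ) - ((d i:ℚ) + (d j:ℚ)))) =
        ρ * ((d i:ℚ) + (d j:ℚ)) * ((m:ℚ) - ((d i:ℚ) + (d j:ℚ))) from mul_assoc _ _ _ |>.symm,
        hρdv]
      push_cast
      ring
    by_cases hxj : x = j
    · rw [hxj, Finset.sum_congr rfl fun y _ => rowj y, Finset.sum_add_distrib,
        Finset.sum_ite_eq' Finset.univ i (fun _ => (d i : ℚ) * (d j : ℚ)), ← Finset.mul_sum,
        Wflow j (Ne.symm hij), hdsj, hdvc]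
      simp only [Finset.mem_univ, if_pos]
      rw [show (1 - ρ) * (((d i:ℚ) + (d j:ℚ)) * ((m:ℚ) - ((d i:ℚ) + (d j:ℚ)))) =
        (1 - ρ) * ((d i:ℚ) + (d j:ℚ)) * ((m:ℚ) - ((d i:ℚ) + (d j:ℚ))) from mul_assoc _ _ _ |>.symm,
        h1ρdv]
      push_cast
      ring
    · rw [Finset.sum_congr rfl fun y _ => rowz x hx hxj y, Finset.sum_sub_distrib,
        Finset.sum_add_distrib,
        Finset.sum_ite_eq' Finset.univ i (fun _ => ρ * W' x j),
        Finset.sum_ite_eq' Finset.univ j (fun _ => ρ * W' x j),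
        Wflow x hx, hdsz x hxj]
      simp only [Finset.mem_univ, if_pos]
      ring
  -- cut computations
  have mainP : ∀ I : Finset V,
      (((Fm m (∑ x ∈ I, d x) : ℤ) : ℚ) ≤ ∑ x ∈ I, ∑ y ∈ Iᶜ, w x y) ∧
      (I.Nonempty → Iᶜ.Nonempty → ((m:ℤ) ∣ ∑ x ∈ I, d x) →
        (m : ℚ) ≤ ∑ x ∈ I, ∑ y ∈ Iᶜ, w x y) := by
    intro I
    by_cases hiI : i ∈ I <;> by_cases hjI : j ∈ I
    · -- Case A : i ∈ I, j ∈ I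
      have hiIc : i ∉ Iᶜ := by simp [hiI]
      have hjIc : j ∉ Iᶜ := by simp [hjI]
      set T : Finset V := I.erase i with hT
      have hiT : i ∉ T := Finset.notMem_erase i I
      have hjT : j ∈ T := Finset.mem_erase.mpr ⟨Ne.symm hij, hjI⟩
      set Z : ℚ := ∑ y ∈ Iᶜ, W' j y with hZ
      set E : ℚ := ∑ x ∈ T.erase j, ∑ y ∈ Iᶜ, W' x y with hE
      have e_i : ∑ y ∈ Iᶜ, w i y = ρ * Z := by
        rw [hZ, Finset.mul_sum]
        apply Finset.sum_congr rfl
        intro y hy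
        rw [rowi y, if_neg (show y ≠ j from fun hh => hjIc (hh ▸ hy)), zero_add]
      have e_j : ∑ y ∈ Iᶜ, w j y = (1 - ρ) * Z := by
        rw [hZ, Finset.mul_sum]
        apply Finset.sum_congr rfl
        intro y hy
        rw [rowj y, if_neg (show y ≠ i from fun hh => hiIc (hh ▸ hy)), zero_add]
      have e_z : ∀ x ∈ T.erase j, ∑ y ∈ Iᶜ, w x y = ∑ y ∈ Iᶜ, W' x y := by
        intro x hx
        have hxj : x ≠ j := Finset.ne_of_mem_erase hx
        have hxi : x ≠ i := Finset.ne_of_mem_erase (Finset.mem_of_mem_erase hx)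
        apply Finset.sum_congr rfl
        intro y hy
        rw [rowz x hxi hxj y, if_neg (show y ≠ i from fun hh => hiIc (hh ▸ hy)),
          if_neg (show y ≠ j from fun hh => hjIc (hh ▸ hy))]
        ring
      have lhs_eq : ∑ x ∈ I, ∑ y ∈ Iᶜ, w x y = ρ * Z + ((1 - ρ) * Z + E) := by
        rw [← Finset.add_sum_erase I (fun x => ∑ y ∈ Iᶜ, w x y) hiI, e_i, ← hT,
          ← Finset.add_sum_erase T (fun x => ∑ y ∈ Iᶜ, w x y) hjT, e_j,
          Finset.sum_congr rfl e_z, ← hE]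
      have rhs_row : ∀ x, ∑ y ∈ Tᶜ, W' x y = ∑ y ∈ Iᶜ, W' x y := by
        intro x
        rw [hT, Finset.compl_erase, Finset.sum_insert hiIc, W'i2, zero_add]
      have rhs_eq : ∑ x ∈ T, ∑ y ∈ Tᶜ, W' x y = Z + E := by
        rw [← Finset.add_sum_erase T (fun x => ∑ y ∈ Tᶜ, W' x y) hjT, rhs_row j, ← hZ,
          Finset.sum_congr rfl (fun x _ => rhs_row x), ← hE]
      have cut_eq : ∑ x ∈ I, ∑ y ∈ Iᶜ, w x y = ∑ x ∈ T, ∑ y ∈ Tᶜ, W' x y := by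
        rw [lhs_eq, rhs_eq]; ring
      have sum_eq : ∑ x ∈ T, ds x = ∑ x ∈ I, d x := by
        have h1 : ∑ x ∈ T.erase j, ds x = ∑ x ∈ T.erase j, d x :=
          Finset.sum_congr rfl fun x hx => hdsz x (Finset.ne_of_mem_erase hx)
        rw [← Finset.add_sum_erase T ds hjT, hdsj, h1]
        have h2 : d j + ∑ x ∈ T.erase j, d x = ∑ x ∈ T, d x :=
          Finset.add_sum_erase T d hjT
        have h3 : d i + ∑ x ∈ T, d x = ∑ x ∈ I, d x :=
          Finset.add_sum_erase I d hiI
        rw [hdv]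
        linarith
      constructor
      · rw [cut_eq, ← sum_eq]
        exact hP2W T hiT
      · intro _ hcne hdvd
        rw [cut_eq]
        obtain ⟨y, hy⟩ := hcne
        refine hP3W T hiT ⟨j, hjT⟩ ⟨y, fun hh => hiIc (hh ▸ hy), fun hh =>
          (Finset.mem_compl.mp hy) (Finset.mem_of_mem_erase hh)⟩ ?_
        rw [sum_eq]
        exact hdvd
    · -- Case C : i ∈ I, j ∉ I
      have hiIc : i ∉ Iᶜ := by simp [hiI]
      have hjIc : j ∈ Iᶜ := by simp [hjI]
      set S0 : Finset V := I.erase i with hS0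
      set S1 : Finset V := insert j S0 with hS1
      have hiS0 : i ∉ S0 := Finset.notMem_erase i I
      have hjS0 : j ∉ S0 := fun hh => hjI (Finset.mem_of_mem_erase hh)
      have hiS1 : i ∉ S1 := by
        rw [hS1, Finset.mem_insert]
        push_neg
        exact ⟨hij, hiS0⟩
      set X : ℚ := ∑ y ∈ Iᶜ.erase j, W' j y with hX
      set Y : ℚ := ∑ x ∈ S0, W' x j with hY
      set E : ℚ := ∑ x ∈ S0, ∑ y ∈ Iᶜ.erase j, W' x y with hE
      have memS0 : ∀ x ∈ S0, x ≠ i ∧ x ≠ j := fun x hx =>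
        ⟨Finset.ne_of_mem_erase hx, fun hh => hjS0 (hh ▸ hx)⟩
      -- c0 : cutW S0 = E + Y
      have c0row : ∀ x, ∑ y ∈ S0ᶜ, W' x y = ∑ y ∈ Iᶜ.erase j, W' x y + W' x j := by
        intro x
        rw [hS0, Finset.compl_erase, Finset.sum_insert hiIc, W'i2, zero_add,
          ← Finset.add_sum_erase Iᶜ (fun y => W' x y) hjIc]
        ring
      have c0 : ∑ x ∈ S0, ∑ y ∈ S0ᶜ, W' x y = E + Y := by
        rw [Finset.sum_congr rfl (fun x _ => c0row x), Finset.sum_add_distrib, ← hE, ← hY]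
      -- c1 : cutW S1 = E + X
      have hS1c : S1ᶜ = (insert i Iᶜ).erase j := by
        rw [hS1, Finset.compl_insert, hS0, Finset.compl_erase]
      have hjmem : j ∈ insert i Iᶜ := Finset.mem_insert_of_mem hjIc
      have c1rowj : ∑ y ∈ S1ᶜ, W' j y = X := by
        rw [hS1c, Finset.sum_erase _ (W'diag j), Finset.sum_insert hiIc, W'i2, zero_add,
          ← Finset.sum_erase Iᶜ (W'diag j), ← hX]
      have c1rowz : ∀ x, ∑ y ∈ S1ᶜ, W' x y = ∑ y ∈ Iᶜ.erase j, W' x y := by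
        intro x
        have h1 : ∑ y ∈ (insert i Iᶜ).erase j, W' x y + W' x j =
            ∑ y ∈ insert i Iᶜ, W' x y := Finset.sum_erase_add _ _ hjmem
        have h2 : ∑ y ∈ Iᶜ.erase j, W' x y + W' x j = ∑ y ∈ Iᶜ, W' x y :=
          Finset.sum_erase_add _ _ hjIc
        have h3 : ∑ y ∈ insert i Iᶜ, W' x y = ∑ y ∈ Iᶜ, W' x y := by
          rw [Finset.sum_insert hiIc, W'i2, zero_add]
        rw [hS1c]
        linarith
      have c1 : ∑ x ∈ S1, ∑ y ∈ S1ᶜ, W' x y = E + X := by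
        rw [hS1, Finset.sum_insert hjS0, ← hS1, c1rowj,
          Finset.sum_congr rfl (fun x _ => c1rowz x), ← hE]
        ring
      -- c2 : cut I = didj + ρ X + ((1-ρ) Y + E)
      have c2rowi : ∑ y ∈ Iᶜ, w i y = (d i : ℚ) * (d j : ℚ) + ρ * X := by
        rw [← Finset.add_sum_erase Iᶜ (fun y => w i y) hjIc]
        have h1 : w i j = (d i : ℚ) * (d j : ℚ) := by
          rw [rowi j, if_pos rfl, W'diag]
          ring
        have h2 : ∑ y ∈ Iᶜ.erase j, w i y = ρ * X := by
          rw [hX, Finset.mul_sum]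
          apply Finset.sum_congr rfl
          intro y hy
          rw [rowi y, if_neg (Finset.ne_of_mem_erase hy), zero_add]
        rw [h1, h2]
      have c2rowz : ∀ x ∈ S0, ∑ y ∈ Iᶜ, w x y =
          (1 - ρ) * W' x j + ∑ y ∈ Iᶜ.erase j, W' x y := by
        intro x hx
        obtain ⟨hxi, hxj⟩ := memS0 x hx
        rw [← Finset.add_sum_erase Iᶜ (fun y => w x y) hjIc]
        have h1 : w x j = (1 - ρ) * W' x j := by
          rw [rowz x hxi hxj j, if_neg (Ne.symm hij), if_pos rfl]
          ring
        have h2 : ∑ y ∈ Iᶜ.erase j, w x y = ∑ y ∈ Iᶜ.erase j, W' x y := by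
          apply Finset.sum_congr rfl
          intro y hy
          have hyj : y ≠ j := Finset.ne_of_mem_erase hy
          have hyi : y ≠ i := fun hh => hiIc (hh ▸ Finset.mem_of_mem_erase hy)
          rw [rowz x hxi hxj y, if_neg hyi, if_neg hyj]
          ring
        rw [h1, h2]
      have cut_eq : ∑ x ∈ I, ∑ y ∈ Iᶜ, w x y =
          (d i : ℚ) * (d j : ℚ) + ρ * (∑ x ∈ S1, ∑ y ∈ S1ᶜ, W' x y) +
            (1 - ρ) * (∑ x ∈ S0, ∑ y ∈ S0ᶜ, W' x y) := by
        rw [← Finset.add_sum_erase I (fun x => ∑ y ∈ Iᶜ, w x y) hiI, c2rowi, ← hS0,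
          Finset.sum_congr rfl c2rowz, Finset.sum_add_distrib, ← Finset.mul_sum, ← hY,
          ← hE, c0, c1]
        ring
      -- degree sums
      have sA0 : ∑ x ∈ S0, ds x = (∑ x ∈ I, d x) - d i := by
        have h1 : ∑ x ∈ S0, ds x = ∑ x ∈ S0, d x :=
          Finset.sum_congr rfl fun x hx => hdsz x (memS0 x hx).2
        have h2 : d i + ∑ x ∈ S0, d x = ∑ x ∈ I, d x :=
          Finset.add_sum_erase I d hiI
        rw [h1]
        linarith
      have sA1 : ∑ x ∈ S1, ds x = (∑ x ∈ I, d x) + d j := by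
        rw [hS1, Finset.sum_insert hjS0, hdsj, sA0, hdv]
        ring
      have h1 : ((Fm m ((∑ x ∈ I, d x) + d j) : ℤ) : ℚ) ≤ ∑ x ∈ S1, ∑ y ∈ S1ᶜ, W' x y := by
        have := hP2W S1 hiS1
        rwa [sA1] at this
      have h0 : ((Fm m ((∑ x ∈ I, d x) - d i) : ℤ) : ℚ) ≤ ∑ x ∈ S0, ∑ y ∈ S0ᶜ, W' x y := by
        have := hP2W S0 hiS0
        rwa [sA0] at this
      have hvZ : d i + d j ≤ (m:ℤ) - 1 := by omega
      constructor
      · have hg := glue (m := (m:ℤ)) (A := ∑ x ∈ I, d x) (by exact_mod_cast hm) (hd i).1 (hd j).1 hvZ h1 h0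
        rw [cut_eq]
        rw [← hρ] at hg
        linarith
      · intro _ _ hdvd
        have hg := glueP3 (m := (m:ℤ)) (A := ∑ x ∈ I, d x) (by exact_mod_cast hm) (hd i).1 (hd j).1 hvZ hdvd h1 h0
        rw [cut_eq]
        rw [← hρ] at hg
        push_cast at hg
        linarith
    · -- Case C' : i ∉ I, j ∈ I
      have hiIc : i ∈ Iᶜ := by simp [hiI]
      have hjIc : j ∉ Iᶜ := by simp [hjI]
      set S0 : Finset V := I.erase j with hS0
      have hiS0 : i ∉ S0 := fun hh => hiI (Finset.mem_of_mem_erase hh)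
      have hiI' : i ∉ I := hiI
      have hjS0 : j ∉ S0 := Finset.notMem_erase j I
      set X : ℚ := ∑ y ∈ Iᶜ, W' j y with hX
      set Y : ℚ := ∑ x ∈ S0, W' x j with hY
      set E : ℚ := ∑ x ∈ S0, ∑ y ∈ Iᶜ, W' x y with hE
      have memS0 : ∀ x ∈ S0, x ≠ i ∧ x ≠ j := fun x hx =>
        ⟨fun hh => hiS0 (hh ▸ hx), Finset.ne_of_mem_erase hx⟩
      -- c1' : cutW I = X + E
      have c1 : ∑ x ∈ I, ∑ y ∈ Iᶜ, W' x y = X + E := by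
        rw [← Finset.add_sum_erase I (fun x => ∑ y ∈ Iᶜ, W' x y) hjI, ← hS0, ← hX, ← hE]
      -- c0' : cutW S0 = E + Y
      have c0row : ∀ x, ∑ y ∈ S0ᶜ, W' x y = W' x j + ∑ y ∈ Iᶜ, W' x y := by
        intro x
        rw [hS0, Finset.compl_erase, Finset.sum_insert hjIc]
      have c0 : ∑ x ∈ S0, ∑ y ∈ S0ᶜ, W' x y = E + Y := by
        rw [Finset.sum_congr rfl (fun x _ => c0row x), Finset.sum_add_distrib, ← hE, ← hY]
        ring
      -- c2' : cut I = didj + (1-ρ) X + (ρ Y + E)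
      have c2rowj : ∑ y ∈ Iᶜ, w j y = (d i : ℚ) * (d j : ℚ) + (1 - ρ) * X := by
        rw [← Finset.add_sum_erase Iᶜ (fun y => w j y) hiIc]
        have h1 : w j i = (d i : ℚ) * (d j : ℚ) := by
          rw [rowj i, if_pos rfl, W'i2]
          ring
        have h2 : ∑ y ∈ Iᶜ.erase i, w j y = (1 - ρ) * ∑ y ∈ Iᶜ.erase i, W' j y := by
          rw [Finset.mul_sum]
          apply Finset.sum_congr rfl
          intro y hy
          rw [rowj y, if_neg (Finset.ne_of_mem_erase hy), zero_add]
        have h3 : ∑ y ∈ Iᶜ.erase i, W' j y = X := by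
          rw [hX, Finset.sum_erase _ (W'i2 j)]
        rw [h1, h2, h3]
      have c2rowz : ∀ x ∈ S0, ∑ y ∈ Iᶜ, w x y =
          ρ * W' x j + ∑ y ∈ Iᶜ, W' x y := by
        intro x hx
        obtain ⟨hxi, hxj⟩ := memS0 x hx
        rw [← Finset.add_sum_erase Iᶜ (fun y => w x y) hiIc]
        have h1 : w x i = ρ * W' x j := by
          rw [rowz x hxi hxj i, if_pos rfl, if_neg hij, W'i2]
          ring
        have h2 : ∑ y ∈ Iᶜ.erase i, w x y = ∑ y ∈ Iᶜ.erase i, W' x y := by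
          apply Finset.sum_congr rfl
          intro y hy
          have hyi : y ≠ i := Finset.ne_of_mem_erase hy
          have hyj : y ≠ j := fun hh => hjIc (hh ▸ Finset.mem_of_mem_erase hy)
          rw [rowz x hxi hxj y, if_neg hyi, if_neg hyj]
          ring
        have h3 : ∑ y ∈ Iᶜ.erase i, W' x y = ∑ y ∈ Iᶜ, W' x y :=
          Finset.sum_erase _ (W'i2 x)
        rw [h1, h2, h3]
      have cut_eq : ∑ x ∈ I, ∑ y ∈ Iᶜ, w x y =
          (d i : ℚ) * (d j : ℚ) + (1 - ρ) * (∑ x ∈ I, ∑ y ∈ Iᶜ, W' x y) +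
            ρ * (∑ x ∈ S0, ∑ y ∈ S0ᶜ, W' x y) := by
        rw [← Finset.add_sum_erase I (fun x => ∑ y ∈ Iᶜ, w x y) hjI, c2rowj, ← hS0,
          Finset.sum_congr rfl c2rowz, Finset.sum_add_distrib, ← Finset.mul_sum, ← hY,
          ← hE, c0, c1]
        ring
      -- degree sums
      have sA0 : ∑ x ∈ S0, ds x = (∑ x ∈ I, d x) - d j := by
        have h1 : ∑ x ∈ S0, ds x = ∑ x ∈ S0, d x :=
          Finset.sum_congr rfl fun x hx => hdsz x (memS0 x hx).2
        have h2 : d j + ∑ x ∈ S0, d x = ∑ x ∈ I, d x :=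
          Finset.add_sum_erase I d hjI
        rw [h1]
        linarith
      have sA1 : ∑ x ∈ I, ds x = (∑ x ∈ I, d x) + d i := by
        have h2 : d j + ∑ x ∈ S0, d x = ∑ x ∈ I, d x :=
          Finset.add_sum_erase I d hjI
        rw [← Finset.add_sum_erase I ds hjI, hdsj, ← hS0, sA0, hdv]
        ring
      have h1 : ((Fm m ((∑ x ∈ I, d x) + d i) : ℤ) : ℚ) ≤ ∑ x ∈ I, ∑ y ∈ Iᶜ, W' x y := by
        have := hP2W I hiI'
        rwa [sA1] at this
      have h0 : ((Fm m ((∑ x ∈ I, d x) - d j) : ℤ) : ℚ) ≤ ∑ x ∈ S0, ∑ y ∈ S0ᶜ, W' x y := by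
        have := hP2W S0 hiS0
        rwa [sA0] at this
      have hvZ : d j + d i ≤ (m:ℤ) - 1 := by omega
      have hne1 : (d j:ℚ)+(d i:ℚ) ≠ 0 := by linarith
      have hne2 : (d i:ℚ)+(d j:ℚ) ≠ 0 := by linarith
      have hswap1 : (d j:ℚ)/((d j:ℚ)+(d i:ℚ)) = 1 - ρ := by
        rw [eq_comm, eq_div_iff hne1, add_comm (d j:ℚ) (d i:ℚ)]
        exact h1ρdv
      have hswap2 : 1 - (d j:ℚ)/((d j:ℚ)+(d i:ℚ)) = ρ := by
        rw [hswap1]; ring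
      constructor
      · have hg := glue (m := (m:ℤ)) (A := ∑ x ∈ I, d x) (by exact_mod_cast hm) (hd j).1 (hd i).1 hvZ h1 h0
        rw [cut_eq]
        rw [hswap2, hswap1] at hg
        linarith
      · intro _ _ hdvd
        have hg := glueP3 (m := (m:ℤ)) (A := ∑ x ∈ I, d x) (by exact_mod_cast hm) (hd j).1 (hd i).1 hvZ hdvd h1 h0
        rw [cut_eq]
        rw [hswap2, hswap1] at hg
        push_cast at hg
        linarith
    · -- Case B : i ∉ I, j ∉ I
      have hiIc : i ∈ Iᶜ := by simp [hiI]
      have hjIc : j ∈ Iᶜ := by simp [hjI]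
      have memI : ∀ x ∈ I, x ≠ i ∧ x ≠ j :=
        fun x hx => ⟨fun hh => hiI (hh ▸ hx), fun hh => hjI (hh ▸ hx)⟩
      have cut_eq : ∑ x ∈ I, ∑ y ∈ Iᶜ, w x y = ∑ x ∈ I, ∑ y ∈ Iᶜ, W' x y := by
        apply Finset.sum_congr rfl
        intro x hx
        obtain ⟨hxi, hxj⟩ := memI x hx
        rw [Finset.sum_congr rfl (fun y (_ : y ∈ Iᶜ) => rowz x hxi hxj y),
          Finset.sum_sub_distrib, Finset.sum_add_distrib,
          Finset.sum_ite_eq' Iᶜ i (fun _ => ρ * W' x j),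
          Finset.sum_ite_eq' Iᶜ j (fun _ => ρ * W' x j),
          if_pos hiIc, if_pos hjIc]
        ring
      have sum_eq : ∑ x ∈ I, ds x = ∑ x ∈ I, d x :=
        Finset.sum_congr rfl fun x hx => hdsz x (memI x hx).2
      constructor
      · rw [cut_eq, ← sum_eq]
        exact hP2W I hiI
      · intro hne _ hdvd
        rw [cut_eq]
        refine hP3W I hiI hne ⟨j, Ne.symm hij, hjI⟩ ?_
        rw [sum_eq]
        exact hdvd
  exact ⟨w, hsym, hdiag, hflow, fun I => (mainP I).1, fun I h1 h2 h3 => (mainP I).2 h1 h2 h3⟩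
theorem mainQ : ∀ (N : ℕ) (V : Type) [Fintype V] [DecidableEq V], Fintype.card V = N →
    ∀ (m : ℕ), 3 ≤ m → ∀ d : V → ℤ, (∀ x, 1 ≤ d x ∧ d x ≤ (m:ℤ) - 1) →
    ((m:ℤ) ∣ ∑ x, d x) → ∃ w : V → V → ℚ, goodW m d w := by
  intro N
  induction N using Nat.strong_induction_on with
  | _ N IH =>
    intro V instF instD hcard m hm d hd hdiv
    by_cases hN2 : Fintype.card V ≤ 2
    · exact base_le2 hm d hd hdiv hN2
    push_neg at hN2
    have hIH' : ∀ (i : V) (d' : {x : V // x ≠ i} → ℤ),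
        (∀ x, 1 ≤ d' x ∧ d' x ≤ (m:ℤ) - 1) → ((m:ℤ) ∣ ∑ x, d' x) →
        ∃ w', goodW m d' w' := by
      intro i d' hd' hdiv'
      have hc : Fintype.card {x : V // x ≠ i} = N - 1 := by
        rw [← hcard]
        simp [Fintype.card_subtype_compl]
      exact IH (N - 1) (by omega) {x : V // x ≠ i} hc m hm d' hd' hdiv'
    by_cases hpair : ∃ i j : V, i ≠ j ∧ d i + d j < m
    · obtain ⟨i, j, hij, hlt⟩ := hpair
      exact merge_step hm d hd hdiv i j hij hlt (hIH' i)
    by_cases hpair2 : ∃ i j : V, i ≠ j ∧ (m:ℤ) < d i + d j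
    · obtain ⟨i, j, hij, hgt⟩ := hpair2
      have hd' : ∀ x, 1 ≤ (m:ℤ) - d x ∧ (m:ℤ) - d x ≤ (m:ℤ) - 1 := by
        intro x
        have := hd x
        omega
      have hdiv' : (m:ℤ) ∣ ∑ x, ((m:ℤ) - d x) := by
        rw [Finset.sum_sub_distrib, Finset.sum_const, nsmul_eq_mul]
        exact dvd_sub ⟨(Finset.univ.card : ℤ), by ring⟩ hdiv
      have hlt' : ((m:ℤ) - d i) + ((m:ℤ) - d j) < m := by omega
      obtain ⟨w, hw⟩ := merge_step hm (fun x => (m:ℤ) - d x) hd' hdiv' i j hij hlt' (hIH' i)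
      exact ⟨w, goodW_compl hm hw⟩
    · push_neg at hpair hpair2
      refine const_case hm d hd hdiv hN2 ?_
      intro x y hxy
      have h1 := hpair x y hxy
      have h2 := hpair2 x y hxy
      omega


/-- For `m ≥ 3`, `1 ≤ d_i ≤ m - 1` and `m ∣ Σ d_i`, there is a rational weighting of the
complete graph on `[n]` satisfying: (P1) the flow through each vertex `i` is `d_i (m - d_i)`;
(P2) the flow across each proper partition `I ⊔ Iᶜ` is at least `⟨d(I)⟩_m ⟨d(Iᶜ)⟩_m`; and
(P3) the flow across each proper `m`-partition (both parts `m`-divisible) is at least `m`. -/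
theorem exists_weighting_P1_P2_P3 {n : ℕ} (m : ℕ) (hm : 3 ≤ m) (d : Fin n → ℤ)
    (hd : ∀ i, 1 ≤ d i ∧ d i ≤ (m : ℤ) - 1) (hdiv : (m : ℤ) ∣ ∑ i, d i) :
    ∃ w : Fin n → Fin n → ℚ,
      (∀ i j, w i j = w j i) ∧ (∀ i, w i i = 0) ∧
      (∀ i, ∑ j, w i j = ((d i * ((m : ℤ) - d i) : ℤ) : ℚ)) ∧
      (∀ I : Finset (Fin n), 2 ≤ I.card → 2 ≤ Iᶜ.card →
        ∑ i ∈ I, ∑ j ∈ Iᶜ, w i j ≥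
          ((((∑ i ∈ I, d i) % (m : ℤ)) * ((∑ j ∈ Iᶜ, d j) % (m : ℤ)) : ℤ) : ℚ)) ∧
      (∀ I : Finset (Fin n), 2 ≤ I.card → 2 ≤ Iᶜ.card →
        (m : ℤ) ∣ (∑ i ∈ I, d i) → (m : ℤ) ∣ (∑ j ∈ Iᶜ, d j) →
        ∑ i ∈ I, ∑ j ∈ Iᶜ, w i j ≥ (m : ℚ)) := by
  
  have hm0 : (0:ℤ) < m := by exact_mod_cast Nat.zero_lt_of_lt hm
  obtain ⟨w, hsym, hdiag, hflow, hP2, hP3⟩ :=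
    mainQ (Fintype.card (Fin n)) (Fin n) rfl m hm d hd hdiv
  refine ⟨w, hsym, hdiag, hflow, ?_, ?_⟩
  · intro I hc2 hc2c
    have hA := hP2 I
    set A := ∑ i ∈ I, d i with hAdef
    set B := ∑ j ∈ Iᶜ, d j with hBdef
    have hS : A + B = ∑ i, d i := Finset.sum_add_sum_compl I d
    rw [ge_iff_le]
    by_cases hdA : (m:ℤ) ∣ A
    · have h0 : A % (m:ℤ) = 0 := Int.emod_eq_zero_of_dvd hdA
      have he : ((A % (m:ℤ)) * (B % (m:ℤ)) : ℤ) = 0 := by rw [h0]; ring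
      rw [he]
      have h1 := Fm_nonneg (m := (m:ℤ)) (a := A) hm0
      have h2 : (0:ℚ) ≤ ((Fm m A : ℤ):ℚ) := by exact_mod_cast h1
      push_cast
      linarith
    · have hA0 : A % (m:ℤ) ≠ 0 := fun h => hdA (Int.dvd_of_emod_eq_zero h)
      have h1 := Int.emod_nonneg A (ne_of_gt hm0)
      have h2' := Int.emod_lt_of_pos A hm0
      have hBA : B % (m:ℤ) = (m:ℤ) - A % (m:ℤ) := by
        have e1 : B % (m:ℤ) = (-A) % (m:ℤ) :=
          emod_congr (by rw [show B - (-A) = A + B from by ring, hS]; exact hdiv)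
        have e2 : (-A) % (m:ℤ) = ((m:ℤ) - A % (m:ℤ)) % (m:ℤ) := by
          refine emod_congr ?_
          rw [show (-A) - ((m:ℤ) - A % (m:ℤ)) = -(A - A % (m:ℤ)) - m from by ring]
          exact dvd_sub (dvd_neg.mpr (Int.dvd_self_sub_of_emod_eq rfl)) (dvd_refl (m:ℤ))
        rw [e1, e2]
        exact Int.emod_eq_of_lt (by omega) (by omega)
      have he : ((A % (m:ℤ)) * (B % (m:ℤ)) : ℤ) = Fm m A := by
        rw [hBA]
        rfl
      rw [he]
      exact hA
  · intro I hc2 hc2c hdvd _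
    exact hP3 I (Finset.card_pos.mp (by omega)) (Finset.card_pos.mp (by omega)) hdvd
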